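/- Let h : X → ℝ^D be bounded measurable and suppose that for all probability measures μ ≠ ν on X the function h is separable for (μ, ν) and h is injective. Then FM*_h(μ, ν) := ‖E_μ[h] − E_ν[h]‖₂ defines a metric on probability measures on X: nonnegativity, symmetry, triangle inequality, and FM*_h(μ,ν) = 0 ⟺ μ = ν. -/

import Mathlib

open MeasureTheory Set
open scoped InnerProductSpace

noncomputable def cdf (μ : Measure ℝ) (ξ : ℝ) : ℝ := (μ (Set.Iic ξ)).toReal

/-- `h` is separable for `(μ, ν)`: along the normalized difference of mean embeddings
`ω*`, the CDF of `⟨ω*, h⟩_♯μ` lies below that of `⟨ω*, h⟩_♯ν` everywhere. -/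
def Separable {X : Type*} [MeasurableSpace X] {D : ℕ}
    (h : X → EuclideanSpace ℝ (Fin D)) (μ ν : Measure X) : Prop :=
  ∀ ξ : ℝ,
    cdf (Measure.map (fun x =>
      ⟪(‖(∫ x, h x ∂μ) - ∫ x, h x ∂ν‖⁻¹ • ((∫ x, h x ∂μ) - ∫ x, h x ∂ν) :
          EuclideanSpace ℝ (Fin D)), h x⟫_ℝ) μ) ξ ≤
    cdf (Measure.map (fun x =>
      ⟪(‖(∫ x, h x ∂μ) - ∫ x, h x ∂ν‖⁻¹ • ((∫ x, h x ∂μ) - ∫ x, h x ∂ν) :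
          EuclideanSpace ℝ (Fin D)), h x⟫_ℝ) ν) ξ

open scoped ENNReal


namespace FMStar
variable {D : ℕ}

local notation "E" => EuclideanSpace ℝ (Fin D)

/-- `x ↦ cos ⟪w, x⟫` as a continuous map. -/
noncomputable def cosw (w : E) : C(E, ℝ) :=
  ⟨fun x => Real.cos ⟪w, x⟫_ℝ, (Real.continuous_cos.comp (continuous_const.inner continuous_id))⟩

noncomputable def sinw (w : E) : C(E, ℝ) :=
  ⟨fun x => Real.sin ⟪w, x⟫_ℝ, (Real.continuous_sin.comp (continuous_const.inner continuous_id))⟩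

@[simp] lemma cosw_apply (w x : E) : cosw w x = Real.cos ⟪w, x⟫_ℝ := rfl
@[simp] lemma sinw_apply (w x : E) : sinw w x = Real.sin ⟪w, x⟫_ℝ := rfl

/-- The set of trigonometric functions. -/
def TrigSet (D : ℕ) : Set C(EuclideanSpace ℝ (Fin D), ℝ) :=
  {f | ∃ w : EuclideanSpace ℝ (Fin D), f = cosw w ∨ f = sinw w}

lemma cosw_mul_cosw (w v : E) :
    cosw w * cosw v = (2⁻¹ : ℝ) • cosw (w - v) + (2⁻¹ : ℝ) • cosw (w + v) := by
  ext x
  simp only [ContinuousMap.mul_apply, ContinuousMap.add_apply, ContinuousMap.smul_apply,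
    cosw_apply, smul_eq_mul, inner_sub_left, inner_add_left]
  rw [Real.cos_sub, Real.cos_add]; ring

lemma sinw_mul_sinw (w v : E) :
    sinw w * sinw v = (2⁻¹ : ℝ) • cosw (w - v) - (2⁻¹ : ℝ) • cosw (w + v) := by
  ext x
  simp only [ContinuousMap.mul_apply, ContinuousMap.sub_apply, ContinuousMap.smul_apply,
    cosw_apply, sinw_apply, smul_eq_mul, inner_sub_left, inner_add_left]
  rw [Real.cos_sub, Real.cos_add]; ring

lemma sinw_mul_cosw (w v : E) :
    sinw w * cosw v = (2⁻¹ : ℝ) • sinw (w + v) + (2⁻¹ : ℝ) • sinw (w - v) := by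
  ext x
  simp only [ContinuousMap.mul_apply, ContinuousMap.add_apply, ContinuousMap.smul_apply,
    cosw_apply, sinw_apply, smul_eq_mul, inner_sub_left, inner_add_left]
  rw [Real.sin_add, Real.sin_sub]; ring

lemma one_mem_span_trig : (1 : C(E, ℝ)) ∈ Submodule.span ℝ (TrigSet D) := by
  have : (1 : C(E, ℝ)) = cosw 0 := by
    ext x; simp [cosw_apply]
  rw [this]
  exact Submodule.subset_span ⟨0, Or.inl rfl⟩

lemma mul_mem_span_trig {f g : C(E, ℝ)} (hf : f ∈ Submodule.span ℝ (TrigSet D))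
    (hg : g ∈ Submodule.span ℝ (TrigSet D)) : f * g ∈ Submodule.span ℝ (TrigSet D) := by
  induction hf using Submodule.span_induction with
  | mem f hf =>
    induction hg using Submodule.span_induction with
    | mem g hg =>
      obtain ⟨w, hw⟩ := hf
      obtain ⟨v, hv⟩ := hg
      have half : ∀ u u' : E, (2⁻¹ : ℝ) • cosw u + (2⁻¹ : ℝ) • cosw u' ∈
          Submodule.span ℝ (TrigSet D) := fun u u' =>
        Submodule.add_mem _
          (Submodule.smul_mem _ _ (Submodule.subset_span ⟨u, Or.inl rfl⟩))
          (Submodule.smul_mem _ _ (Submodule.subset_span ⟨u', Or.inl rfl⟩))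
      have halfs : ∀ u u' : E, (2⁻¹ : ℝ) • sinw u + (2⁻¹ : ℝ) • sinw u' ∈
          Submodule.span ℝ (TrigSet D) := fun u u' =>
        Submodule.add_mem _
          (Submodule.smul_mem _ _ (Submodule.subset_span ⟨u, Or.inr rfl⟩))
          (Submodule.smul_mem _ _ (Submodule.subset_span ⟨u', Or.inr rfl⟩))
      rcases hw with rfl | rfl <;> rcases hv with rfl | rfl
      · rw [cosw_mul_cosw]; exact half _ _
      · rw [mul_comm, sinw_mul_cosw]; exact halfs _ _
      · rw [sinw_mul_cosw]; exact halfs _ _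
      · rw [sinw_mul_sinw]
        exact Submodule.sub_mem _
          (Submodule.smul_mem _ _ (Submodule.subset_span ⟨_, Or.inl rfl⟩))
          (Submodule.smul_mem _ _ (Submodule.subset_span ⟨_, Or.inl rfl⟩))
    | zero => rw [mul_zero]; exact Submodule.zero_mem _
    | add g₁ g₂ _ _ h1 h2 => rw [mul_add]; exact Submodule.add_mem _ h1 h2
    | smul a g _ hg => rw [mul_smul_comm]; exact Submodule.smul_mem _ _ hg
  | zero => rw [zero_mul]; exact Submodule.zero_mem _
  | add f₁ f₂ _ _ h1 h2 => rw [add_mul]; exact Submodule.add_mem _ h1 h2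
  | smul a f _ hf => rw [smul_mul_assoc]; exact Submodule.smul_mem _ _ hf

/-- The span of the trigonometric functions, as a subalgebra. -/
noncomputable def trigAlg (D : ℕ) : Subalgebra ℝ C(EuclideanSpace ℝ (Fin D), ℝ) :=
  (Submodule.span ℝ (TrigSet D)).toSubalgebra one_mem_span_trig
    (fun _ _ => mul_mem_span_trig)

lemma mem_trigAlg_iff {f : C(E, ℝ)} :
    f ∈ trigAlg D ↔ f ∈ Submodule.span ℝ (TrigSet D) := Iff.rfl


lemma exists_trig_ne {x y : E} (hxy : x ≠ y) :
    ∃ w : E, Real.cos ⟪w, x⟫_ℝ ≠ Real.cos ⟪w, y⟫_ℝ ∨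
      Real.sin ⟪w, x⟫_ℝ ≠ Real.sin ⟪w, y⟫_ℝ := by
  set d : E := x - y with hd
  have hd0 : d ≠ 0 := sub_ne_zero.2 hxy
  have hnd : ‖d‖ ^ 2 ≠ 0 := pow_ne_zero 2 (norm_ne_zero_iff.2 hd0)
  refine ⟨(Real.pi / ‖d‖ ^ 2) • d, ?_⟩
  set a : ℝ := ⟪(Real.pi / ‖d‖ ^ 2) • d, x⟫_ℝ
  set b : ℝ := ⟪(Real.pi / ‖d‖ ^ 2) • d, y⟫_ℝ
  have hab : a = b + Real.pi := by
    have : a - b = Real.pi := by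
      have : a - b = ⟪(Real.pi / ‖d‖ ^ 2) • d, d⟫_ℝ := by
        simp only [a, b, ← inner_sub_right, hd]
      rw [this, real_inner_smul_left, real_inner_self_eq_norm_sq]
      field_simp
    linarith
  by_contra hcon
  push_neg at hcon
  obtain ⟨h1, h2⟩ := hcon
  rw [hab, Real.cos_add_pi] at h1
  rw [hab, Real.sin_add_pi] at h2
  have hc : Real.cos b = 0 := by linarith
  have hs : Real.sin b = 0 := by linarith
  have := Real.sin_sq_add_cos_sq b
  rw [hc, hs] at this; norm_num at this


noncomputable def inclCM (K : Set (EuclideanSpace ℝ (Fin D))) : C(↥K, EuclideanSpace ℝ (Fin D)) :=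
  ⟨Subtype.val, continuous_subtype_val⟩

noncomputable def trigAlgK (K : Set (EuclideanSpace ℝ (Fin D))) : Subalgebra ℝ C(↥K, ℝ) :=
  (trigAlg D).map (ContinuousMap.compRightAlgHom ℝ ℝ (inclCM K))

lemma trigAlgK_separates (K : Set (EuclideanSpace ℝ (Fin D))) :
    (trigAlgK (D := D) K).SeparatesPoints := by
  intro x y hxy
  have hxy' : (x : E) ≠ (y : E) := Subtype.coe_injective.ne hxy
  obtain ⟨w, hw⟩ := exists_trig_ne hxy'
  rcases hw with hw | hw
  · have hmem : (cosw w).comp (inclCM K) ∈ trigAlgK (D := D) K :=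
      Subalgebra.mem_map.2 ⟨cosw w, Submodule.subset_span ⟨w, Or.inl rfl⟩, rfl⟩
    exact ⟨_, Set.mem_image_of_mem _ hmem, hw⟩
  · have hmem : (sinw w).comp (inclCM K) ∈ trigAlgK (D := D) K :=
      Subalgebra.mem_map.2 ⟨sinw w, Submodule.subset_span ⟨w, Or.inr rfl⟩, rfl⟩
    exact ⟨_, Set.mem_image_of_mem _ hmem, hw⟩



end FMStar

namespace FMStar
section Meas
variable {X : Type*} [MeasurableSpace X] [StandardBorelSpace X] {D : ℕ}
local notation "E" => EuclideanSpace ℝ (Fin D)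

lemma integrable_of_bound {Y : Type*} [MeasurableSpace Y] {F : Type*} [NormedAddCommGroup F]
    (ρ : Measure Y) [IsFiniteMeasure ρ] {f : Y → F} (hf : AEStronglyMeasurable f ρ) {B : ℝ}
    (hB : ∀ x, ‖f x‖ ≤ B) : Integrable f ρ :=
  Integrable.mono' (integrable_const B) hf (Filter.Eventually.of_forall hB)

lemma cdf_nonneg' (m : Measure ℝ) (ξ : ℝ) : 0 ≤ cdf m ξ := ENNReal.toReal_nonneg

lemma cdf_le_one' (m : Measure ℝ) [IsProbabilityMeasure m] (ξ : ℝ) : cdf m ξ ≤ 1 := by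
  have := ENNReal.toReal_mono (ENNReal.one_ne_top) (prob_le_one (μ := m) (s := Set.Iic ξ))
  exact (by simpa using this : (m (Set.Iic ξ)).toReal ≤ 1)

lemma cdf_mix {Y : Type*} [MeasurableSpace Y] {f : Y → ℝ} (hf : Measurable f)
    (μ α : Measure Y) [IsFiniteMeasure μ] [IsFiniteMeasure α] {a b : ℝ≥0∞}
    (ha : a ≠ ⊤) (hb : b ≠ ⊤) (ξ : ℝ) :
    cdf (Measure.map f (a • μ + b • α)) ξ
      = a.toReal * cdf (Measure.map f μ) ξ + b.toReal * cdf (Measure.map f α) ξ := by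
  unfold cdf
  rw [Measure.map_add _ _ hf, Measure.map_smul, Measure.map_smul]
  rw [Measure.add_apply, Measure.smul_apply, Measure.smul_apply, smul_eq_mul, smul_eq_mul]
  rw [ENNReal.toReal_add, ENNReal.toReal_mul, ENNReal.toReal_mul]
  · exact ENNReal.mul_ne_top ha (by
      rw [Measure.map_apply hf measurableSet_Iic]; exact measure_ne_top _ _)
  · exact ENNReal.mul_ne_top hb (by
      rw [Measure.map_apply hf measurableSet_Iic]; exact measure_ne_top _ _)

set_option maxHeartbeats 1000000 in
lemma key_cdf_le (h : X → E) (hm : Measurable h) {C : ℝ} (hb : ∀ x, ‖h x‖ ≤ C)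
    (hsep : ∀ μ ν : Measure X, IsProbabilityMeasure μ → IsProbabilityMeasure ν →
      μ ≠ ν → Separable h μ ν)
    (μ ν : Measure X) [IsProbabilityMeasure μ] [IsProbabilityMeasure ν]
    (hmean : (∫ x, h x ∂μ) = ∫ x, h x ∂ν)
    {v : E} (hv : v ∈ Submodule.span ℝ {y : E | ∃ a b : X, y = h a - h b})
    (hv0 : v ≠ 0) (ξ : ℝ) :
    cdf (Measure.map (fun x => ⟪(‖v‖⁻¹ • v : E), h x⟫_ℝ) μ) ξ
      ≤ cdf (Measure.map (fun x => ⟪(‖v‖⁻¹ • v : E), h x⟫_ℝ) ν) ξ := by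
  classical
  have hInt : ∀ (ρ : Measure X) [IsFiniteMeasure ρ], Integrable h ρ := by
    intro ρ _
    exact integrable_of_bound ρ hm.aestronglyMeasurable hb
  -- decompose v as a combination of differences
  obtain ⟨n, c, g, hsum⟩ := Submodule.mem_span_set'.1 hv
  choose p q hpq using fun i => (g i).2
  set A : Fin n → X := fun i => if 0 ≤ c i then p i else q i with hA
  set B : Fin n → X := fun i => if 0 ≤ c i then q i else p i with hB
  set w : Fin n → ℝ := fun i => |c i| with hw
  have hwnn : ∀ i, 0 ≤ w i := fun i => abs_nonneg _
  have hterm : ∀ i, w i • (h (A i) - h (B i)) = c i • ((g i : E)) := by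
    intro i
    by_cases hci : 0 ≤ c i
    · simp only [hA, hB, hw, if_pos hci, abs_of_nonneg hci, hpq i]
    · simp only [hA, hB, hw, if_neg hci, abs_of_neg (not_le.1 hci), hpq i,
        neg_smul, smul_sub, neg_sub]
      rw [← smul_sub]
      rw [smul_sub]
      abel
  set S : ℝ := ∑ i, w i with hS
  have hSnn : 0 ≤ S := Finset.sum_nonneg fun i _ => hwnn i
  have hS0 : 0 < S := by
    rcases hSnn.lt_or_eq with hlt | heq
    · exact hlt
    · exfalso
      apply hv0
      rw [← hsum]
      refine Finset.sum_eq_zero fun i _ => ?_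
      have : w i = 0 := by
        have := (Finset.sum_eq_zero_iff_of_nonneg (fun i _ => hwnn i)).1 heq.symm i
          (Finset.mem_univ i)
        exact this
      have hci : c i = 0 := abs_eq_zero.1 this
      rw [hci, zero_smul]
  set α : Measure X := ∑ i, ENNReal.ofReal (w i / S) • Measure.dirac (A i) with hα
  set β : Measure X := ∑ i, ENNReal.ofReal (w i / S) • Measure.dirac (B i) with hβ
  have hprob : ∀ (P : Fin n → X), IsProbabilityMeasure
      (∑ i, ENNReal.ofReal (w i / S) • Measure.dirac (P i)) := by
    intro P
    constructor
    rw [Measure.finset_sum_apply]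
    simp only [Measure.smul_apply, measure_univ, smul_eq_mul, mul_one]
    rw [← ENNReal.ofReal_sum_of_nonneg (fun i _ => div_nonneg (hwnn i) hSnn)]
    rw [← Finset.sum_div, ← hS, div_self hS0.ne']
    exact ENNReal.ofReal_one
  haveI hαp : IsProbabilityMeasure α := hprob A
  haveI hβp : IsProbabilityMeasure β := hprob B
  have hmean' : ∀ (P : Fin n → X), (∫ x, h x ∂(∑ i, ENNReal.ofReal (w i / S) • Measure.dirac (P i)))
      = ∑ i, (w i / S) • h (P i) := by
    intro P
    rw [integral_finset_sum_measure (fun i _ => (hInt _).smul_measure ENNReal.ofReal_ne_top)]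
    refine Finset.sum_congr rfl fun i _ => ?_
    rw [integral_smul_measure, ENNReal.toReal_ofReal (div_nonneg (hwnn i) hSnn),
      integral_dirac' h (P i) hm.stronglyMeasurable]
  have hdiff : (∫ x, h x ∂α) - ∫ x, h x ∂β = S⁻¹ • v := by
    rw [hα, hβ, hmean' A, hmean' B, ← Finset.sum_sub_distrib]
    have : ∀ i : Fin n, (w i / S) • h (A i) - (w i / S) • h (B i)
        = S⁻¹ • (c i • ((g i : E))) := by
      intro i
      rw [← smul_sub, ← hterm i, smul_smul, div_eq_inv_mul]
    simp_rw [this]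
    rw [← Finset.smul_sum, hsum]
  -- the direction
  set u : E := ‖v‖⁻¹ • v with hu
  have hfm : Measurable (fun x => ⟪(u : E), h x⟫_ℝ) :=
    (continuous_const.inner continuous_id).measurable.comp hm
  refine le_of_forall_pos_le_add fun ε hε => ?_
  set t : ℝ := 1 / (1 + ε) with htdef
  have ht0 : 0 < t := by positivity
  have ht1 : t < 1 := by
    rw [htdef, div_lt_one (by linarith)]; linarith
  set ρ : Measure X := ENNReal.ofReal t • μ + ENNReal.ofReal (1 - t) • α with hρ
  set σ : Measure X := ENNReal.ofReal t • ν + ENNReal.ofReal (1 - t) • β with hσ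
  have hmixprob : ∀ (m m' : Measure X) [IsProbabilityMeasure m] [IsProbabilityMeasure m'],
      IsProbabilityMeasure (ENNReal.ofReal t • m + ENNReal.ofReal (1 - t) • m') := by
    intro m m' _ _
    constructor
    rw [Measure.add_apply, Measure.smul_apply, Measure.smul_apply, measure_univ, measure_univ,
      smul_eq_mul, smul_eq_mul, mul_one, mul_one,
      ← ENNReal.ofReal_add ht0.le (by linarith)]
    norm_num
  haveI hρp : IsProbabilityMeasure ρ := hmixprob μ α
  haveI hσp : IsProbabilityMeasure σ := hmixprob ν β
  have hmixmean : ∀ (m m' : Measure X) [IsProbabilityMeasure m] [IsProbabilityMeasure m'],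
      (∫ x, h x ∂(ENNReal.ofReal t • m + ENNReal.ofReal (1 - t) • m'))
        = t • (∫ x, h x ∂m) + (1 - t) • (∫ x, h x ∂m') := by
    intro m m' _ _
    rw [integral_add_measure ((hInt _).smul_measure ENNReal.ofReal_ne_top)
      ((hInt _).smul_measure ENNReal.ofReal_ne_top), integral_smul_measure,
      integral_smul_measure, ENNReal.toReal_ofReal ht0.le,
      ENNReal.toReal_ofReal (by linarith : (0:ℝ) ≤ 1 - t)]
  have hd : (∫ x, h x ∂ρ) - ∫ x, h x ∂σ = ((1 - t) * S⁻¹) • v := by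
    rw [hρ, hσ, hmixmean μ α, hmixmean ν β, hmean]
    have : t • (∫ x, h x ∂ν) + (1 - t) • (∫ x, h x ∂α)
        - (t • (∫ x, h x ∂ν) + (1 - t) • (∫ x, h x ∂β))
        = (1 - t) • ((∫ x, h x ∂α) - (∫ x, h x ∂β)) := by
      rw [smul_sub]; abel
    rw [this, hdiff, smul_smul]
  have hr : (0:ℝ) < (1 - t) * S⁻¹ := by
    have : (0:ℝ) < 1 - t := by linarith
    positivity
  have hne : ρ ≠ σ := by
    intro hrs
    have h0 : (∫ x, h x ∂ρ) - ∫ x, h x ∂σ = 0 := by rw [hrs, sub_self]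
    rw [hd] at h0
    exact smul_ne_zero hr.ne' hv0 h0
  have hsepa := hsep ρ σ hρp hσp hne ξ
  rw [hd] at hsepa
  have hnorm : (‖((1 - t) * S⁻¹) • v‖⁻¹ • (((1 - t) * S⁻¹) • v) : E) = u := by
    rw [hu, norm_smul, Real.norm_eq_abs, abs_of_pos hr, smul_smul]
    congr 1
    have hnv : ‖v‖ ≠ 0 := norm_ne_zero_iff.2 hv0
    rw [mul_inv, mul_inv]
    field_simp
    exact div_self (by linarith : (1:ℝ) - t ≠ 0)
  rw [hnorm] at hsepa
  rw [hρ, hσ, cdf_mix hfm _ _ ENNReal.ofReal_ne_top ENNReal.ofReal_ne_top,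
    cdf_mix hfm _ _ ENNReal.ofReal_ne_top ENNReal.ofReal_ne_top,
    ENNReal.toReal_ofReal ht0.le, ENNReal.toReal_ofReal (by linarith : (0:ℝ) ≤ 1 - t)] at hsepa
  haveI : IsProbabilityMeasure (Measure.map (fun x => ⟪(u : E), h x⟫_ℝ) β) :=
    Measure.isProbabilityMeasure_map hfm.aemeasurable
  have hFα : 0 ≤ cdf (Measure.map (fun x => ⟪(u : E), h x⟫_ℝ) α) ξ := cdf_nonneg' _ _
  have hFβ : cdf (Measure.map (fun x => ⟪(u : E), h x⟫_ℝ) β) ξ ≤ 1 := cdf_le_one' _ _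
  have hteps : (1 - t) = t * ε := by
    rw [htdef]; field_simp; ring
  set Fμ := cdf (Measure.map (fun x => ⟪(u : E), h x⟫_ℝ) μ) ξ
  set Fν := cdf (Measure.map (fun x => ⟪(u : E), h x⟫_ℝ) ν) ξ
  set Fα := cdf (Measure.map (fun x => ⟪(u : E), h x⟫_ℝ) α) ξ
  set Fβ := cdf (Measure.map (fun x => ⟪(u : E), h x⟫_ℝ) β) ξ
  have h1 : 0 ≤ (1 - t) * Fα := mul_nonneg (by linarith) hFα
  have h2 : (1 - t) * Fβ ≤ (1 - t) := by
    have := mul_le_mul_of_nonneg_left hFβ (by linarith : (0:ℝ) ≤ 1 - t)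
    simpa using this
  have hmain : t * Fμ ≤ t * (Fν + ε) := by
    rw [mul_add]
    linarith
  exact le_of_mul_le_mul_left hmain ht0

lemma key_map_eq (h : X → E) (hm : Measurable h) {C : ℝ} (hb : ∀ x, ‖h x‖ ≤ C)
    (hsep : ∀ μ ν : Measure X, IsProbabilityMeasure μ → IsProbabilityMeasure ν →
      μ ≠ ν → Separable h μ ν)
    (μ ν : Measure X) [IsProbabilityMeasure μ] [IsProbabilityMeasure ν]
    (hmean : (∫ x, h x ∂μ) = ∫ x, h x ∂ν)
    {v : E} (hv : v ∈ Submodule.span ℝ {y : E | ∃ a b : X, y = h a - h b})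
    (hv0 : v ≠ 0) :
    Measure.map (fun x => ⟪(‖v‖⁻¹ • v : E), h x⟫_ℝ) μ
      = Measure.map (fun x => ⟪(‖v‖⁻¹ • v : E), h x⟫_ℝ) ν := by
  have hfm : Measurable (fun x => ⟪((‖v‖⁻¹ • v : E) : E), h x⟫_ℝ) :=
    (continuous_const.inner continuous_id).measurable.comp hm
  haveI : IsProbabilityMeasure (Measure.map (fun x => ⟪(‖v‖⁻¹ • v : E), h x⟫_ℝ) μ) :=
    Measure.isProbabilityMeasure_map hfm.aemeasurable
  refine Measure.ext_of_Iic _ _ fun ξ => ?_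
  have h1 := key_cdf_le h hm hb hsep μ ν hmean hv hv0 ξ
  have h2 := key_cdf_le h hm hb hsep ν μ hmean.symm hv hv0 ξ
  unfold cdf at h1 h2
  exact (ENNReal.toReal_eq_toReal_iff'
    (by rw [Measure.map_apply hfm measurableSet_Iic]; exact measure_ne_top _ _)
    (by rw [Measure.map_apply hfm measurableSet_Iic]; exact measure_ne_top _ _)).1
    (le_antisymm h1 h2)

/-- Pushforwards along every linear functional agree. -/
lemma map_inner_all (h : X → E) (hm : Measurable h) {C : ℝ} (hb : ∀ x, ‖h x‖ ≤ C)
    (hsep : ∀ μ ν : Measure X, IsProbabilityMeasure μ → IsProbabilityMeasure ν →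
      μ ≠ ν → Separable h μ ν)
    (μ ν : Measure X) [IsProbabilityMeasure μ] [IsProbabilityMeasure ν]
    (hmean : (∫ x, h x ∂μ) = ∫ x, h x ∂ν) (x₀ : X) (wv : E) :
    Measure.map (fun x => ⟪(wv : E), h x⟫_ℝ) μ = Measure.map (fun x => ⟪(wv : E), h x⟫_ℝ) ν := by
  set V : Submodule ℝ (EuclideanSpace ℝ (Fin D)) :=
    Submodule.span ℝ {y : E | ∃ a b : X, y = h a - h b} with hV
  set w₁ : E := (V.orthogonalProjection wv : E) with hw₁
  have hw₁V : w₁ ∈ V := (V.orthogonalProjection wv).2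
  have hw₂ : wv - w₁ ∈ Vᗮ := Submodule.sub_starProjection_mem_orthogonal (K := V) wv
  set cc : ℝ := ⟪wv - w₁, h x₀⟫_ℝ with hcc
  have hfun : ∀ x, ⟪(wv : E), h x⟫_ℝ = ⟪(w₁ : E), h x⟫_ℝ + cc := by
    intro x
    have hmem : h x - h x₀ ∈ V := Submodule.subset_span ⟨x, x₀, rfl⟩
    have h0 : ⟪h x - h x₀, wv - w₁⟫_ℝ = 0 :=
      (Submodule.mem_orthogonal V _).1 hw₂ _ hmem
    have h0' : ⟪wv - w₁, h x - h x₀⟫_ℝ = 0 := by rw [real_inner_comm]; exact h0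
    have e1 : ⟪wv, h x⟫_ℝ = ⟪w₁, h x⟫_ℝ + ⟪wv - w₁, h x⟫_ℝ := by
      rw [inner_sub_left]; ring
    have e2 : ⟪wv - w₁, h x⟫_ℝ = cc := by
      have he : ⟪wv - w₁, h x⟫_ℝ - ⟪wv - w₁, h x₀⟫_ℝ = 0 := by
        rw [← inner_sub_right]; exact h0'
      rw [hcc]; linarith
    rw [e1, e2]
  by_cases hw0 : w₁ = 0
  · have hconst : (fun x => ⟪(wv : E), h x⟫_ℝ) = fun _ : X => cc := by
      funext x
      rw [hfun x, hw0, inner_zero_left, zero_add]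
    rw [hconst, Measure.map_const, Measure.map_const, measure_univ, measure_univ]
  · have hkey := key_map_eq h hm hb hsep μ ν hmean (v := w₁) hw₁V hw0
    have hnw : ‖w₁‖ ≠ 0 := norm_ne_zero_iff.2 hw0
    have hrw : (fun x => ⟪(wv : E), h x⟫_ℝ)
        = (fun r : ℝ => ‖w₁‖ * r + cc) ∘ (fun x => ⟪(‖w₁‖⁻¹ • w₁ : E), h x⟫_ℝ) := by
      funext x
      simp only [Function.comp_apply, real_inner_smul_left]
      rw [hfun x, mul_inv_cancel_left₀ hnw]
    have hgm : Measurable (fun x => ⟪((‖w₁‖⁻¹ • w₁ : E) : E), h x⟫_ℝ) :=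
      (continuous_const.inner continuous_id).measurable.comp hm
    have haff : Measurable (fun r : ℝ => ‖w₁‖ * r + cc) :=
      ((continuous_const.mul continuous_id).add continuous_const).measurable
    rw [hrw, ← Measure.map_map haff hgm, ← Measure.map_map haff hgm, hkey]

set_option maxHeartbeats 1000000 in
lemma map_h_eq (h : X → E) (hm : Measurable h) {C : ℝ} (hb : ∀ x, ‖h x‖ ≤ C)
    (hsep : ∀ μ ν : Measure X, IsProbabilityMeasure μ → IsProbabilityMeasure ν →
      μ ≠ ν → Separable h μ ν)
    (μ ν : Measure X) [IsProbabilityMeasure μ] [IsProbabilityMeasure ν]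
    (hmean : (∫ x, h x ∂μ) = ∫ x, h x ∂ν) (x₀ : X) :
    Measure.map h μ = Measure.map h ν := by
  set μ' : Measure (EuclideanSpace ℝ (Fin D)) := Measure.map h μ with hμ'
  set ν' : Measure (EuclideanSpace ℝ (Fin D)) := Measure.map h ν with hν'
  haveI : IsProbabilityMeasure μ' := Measure.isProbabilityMeasure_map hm.aemeasurable
  haveI : IsProbabilityMeasure ν' := Measure.isProbabilityMeasure_map hm.aemeasurable
  set K : Set (EuclideanSpace ℝ (Fin D)) := Metric.closedBall 0 C with hKdef
  have hKmem : ∀ x : X, h x ∈ K := fun x => mem_closedBall_zero_iff.2 (hb x)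
  have hnullμ : μ' Kᶜ = 0 := by
    rw [hμ', Measure.map_apply hm (measurableSet_closedBall.compl)]
    convert measure_empty (μ := μ)
    ext x
    simp [hKmem x, hb x]
  have hnullν : ν' Kᶜ = 0 := by
    rw [hν', Measure.map_apply hm (measurableSet_closedBall.compl)]
    convert measure_empty (μ := ν)
    ext x
    simp [hKmem x, hb x]
  haveI : CompactSpace ↥K := isCompact_iff_compactSpace.1 (isCompact_closedBall _ _)
  -- generator integral equality
  have hgen : ∀ (wv : EuclideanSpace ℝ (Fin D)) (φ : ℝ → ℝ), Continuous φ →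
      ∫ y, φ ⟪wv, y⟫_ℝ ∂μ' = ∫ y, φ ⟪wv, y⟫_ℝ ∂ν' := by
    intro wv φ hφ
    have hinner : Measurable (fun x : X => ⟪wv, h x⟫_ℝ) :=
      (continuous_const.inner continuous_id).measurable.comp hm
    have e1 : ∫ y, φ ⟪wv, y⟫_ℝ ∂μ' = ∫ x, φ ⟪wv, h x⟫_ℝ ∂μ := by
      rw [hμ', integral_map hm.aemeasurable]
      exact (hφ.comp (continuous_const.inner continuous_id)).aestronglyMeasurable
    have e2 : ∫ y, φ ⟪wv, y⟫_ℝ ∂ν' = ∫ x, φ ⟪wv, h x⟫_ℝ ∂ν := by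
      rw [hν', integral_map hm.aemeasurable]
      exact (hφ.comp (continuous_const.inner continuous_id)).aestronglyMeasurable
    have e3 : ∫ x, φ ⟪wv, h x⟫_ℝ ∂μ = ∫ r, φ r ∂(Measure.map (fun x => ⟪wv, h x⟫_ℝ) μ) := by
      rw [integral_map hinner.aemeasurable hφ.aestronglyMeasurable]
    have e4 : ∫ x, φ ⟪wv, h x⟫_ℝ ∂ν = ∫ r, φ r ∂(Measure.map (fun x => ⟪wv, h x⟫_ℝ) ν) := by
      rw [integral_map hinner.aemeasurable hφ.aestronglyMeasurable]
    rw [e1, e2, e3, e4, map_inner_all h hm hb hsep μ ν hmean x₀ wv]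
  -- integrals agree on the span of trigonometric functions
  have hspan : ∀ Φ : C(EuclideanSpace ℝ (Fin D), ℝ), Φ ∈ Submodule.span ℝ (TrigSet D) →
      (∃ B : ℝ, ∀ y, |Φ y| ≤ B) ∧ ∫ y, Φ y ∂μ' = ∫ y, Φ y ∂ν' := by
    intro Φ hΦ
    induction hΦ using Submodule.span_induction with
    | mem Φ hΦ =>
      obtain ⟨wv, hwv⟩ := hΦ
      rcases hwv with rfl | rfl
      · exact ⟨⟨1, fun y => Real.abs_cos_le_one _⟩, hgen wv Real.cos Real.continuous_cos⟩
      · exact ⟨⟨1, fun y => Real.abs_sin_le_one _⟩, hgen wv Real.sin Real.continuous_sin⟩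
    | zero => exact ⟨⟨0, fun y => by simp⟩, by simp⟩
    | add Φ₁ Φ₂ _ _ ih1 ih2 =>
      obtain ⟨⟨B₁, hB₁⟩, hi1⟩ := ih1
      obtain ⟨⟨B₂, hB₂⟩, hi2⟩ := ih2
      refine ⟨⟨B₁ + B₂, fun y => ?_⟩, ?_⟩
      · calc |(Φ₁ + Φ₂) y| ≤ |Φ₁ y| + |Φ₂ y| := abs_add_le _ _
          _ ≤ B₁ + B₂ := add_le_add (hB₁ y) (hB₂ y)
      · have int1 : ∀ (m : Measure (EuclideanSpace ℝ (Fin D))) [IsProbabilityMeasure m],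
            Integrable (fun y => Φ₁ y) m := by
          intro m _
          exact integrable_of_bound m Φ₁.continuous.aestronglyMeasurable
            (fun y => by rw [Real.norm_eq_abs]; exact hB₁ y)
        have int2 : ∀ (m : Measure (EuclideanSpace ℝ (Fin D))) [IsProbabilityMeasure m],
            Integrable (fun y => Φ₂ y) m := by
          intro m _
          exact integrable_of_bound m Φ₂.continuous.aestronglyMeasurable
            (fun y => by rw [Real.norm_eq_abs]; exact hB₂ y)
        simp only [ContinuousMap.add_apply]
        rw [integral_add (int1 μ') (int2 μ'), integral_add (int1 ν') (int2 ν'), hi1, hi2]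
    | smul a Φ₁ _ ih =>
      obtain ⟨⟨B₁, hB₁⟩, hi1⟩ := ih
      refine ⟨⟨|a| * B₁, fun y => ?_⟩, ?_⟩
      · simp only [ContinuousMap.smul_apply, smul_eq_mul, abs_mul]
        exact mul_le_mul_of_nonneg_left (hB₁ y) (abs_nonneg a)
      · simp only [ContinuousMap.smul_apply, smul_eq_mul]
        rw [integral_const_mul, integral_const_mul, hi1]
  -- conclude by Stone-Weierstrass approximation
  refine ext_of_forall_lintegral_eq_of_IsFiniteMeasure fun f => ?_
  set g : EuclideanSpace ℝ (Fin D) → ℝ := fun y => (f y : ℝ) with hgdef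
  have hgc : Continuous g := NNReal.continuous_coe.comp f.continuous
  obtain ⟨Bf, hBf⟩ := f.bounded
  have hgb : ∀ y, |g y| ≤ (f 0 : ℝ) + Bf := by
    intro y
    have hgy : g y = ((f y : ℝ)) := rfl
    rw [hgy, abs_of_nonneg (f y).coe_nonneg]
    have hd := hBf y 0
    rw [NNReal.dist_eq] at hd
    have hle : ((f y : ℝ)) - ((f 0 : ℝ)) ≤ Bf := (le_abs_self _).trans hd
    linarith [(f 0).coe_nonneg]
  have hgint : ∀ (m : Measure (EuclideanSpace ℝ (Fin D))) [IsProbabilityMeasure m],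
      Integrable g m := by
    intro m _
    exact integrable_of_bound m hgc.aestronglyMeasurable
      (fun y => by rw [Real.norm_eq_abs]; exact hgb y)
  have hint : ∫ y, g y ∂μ' = ∫ y, g y ∂ν' := by
    have key : ∀ ε : ℝ, 0 < ε → |(∫ y, g y ∂μ') - ∫ y, g y ∂ν'| ≤ ε := by
      intro ε hε
      obtain ⟨f₀, hf₀near⟩ :=
        ContinuousMap.exists_mem_subalgebra_near_continuousMap_of_separatesPoints
          (trigAlgK K) (trigAlgK_separates K)
          (ContinuousMap.restrict K ⟨g, hgc⟩) (ε / 4) (by linarith)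
      obtain ⟨Φ, hΦmem, hΦeq⟩ := Subalgebra.mem_map.1 f₀.2
      obtain ⟨⟨BΦ, hBΦ⟩, hΦint⟩ := hspan Φ hΦmem
      have hΦint' : ∀ (m : Measure (EuclideanSpace ℝ (Fin D))) [IsProbabilityMeasure m],
          Integrable (fun y => Φ y) m := by
        intro m _
        exact integrable_of_bound m Φ.continuous.aestronglyMeasurable
          (fun y => by rw [Real.norm_eq_abs]; exact hBΦ y)
      have hptw : ∀ y (hy : y ∈ K), |g y - Φ y| ≤ ε / 4 := by
        intro y hy
        have hev : ((ContinuousMap.restrict K ⟨g, hgc⟩) - ((f₀ : C(↥K, ℝ)))) ⟨y, hy⟩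
            = g y - Φ y := by
          simp only [ContinuousMap.sub_apply, ContinuousMap.restrict_apply, ← hΦeq]
          rfl
        have h1 : |((ContinuousMap.restrict K ⟨g, hgc⟩) - ((f₀ : C(↥K, ℝ)))) ⟨y, hy⟩|
            ≤ ‖(ContinuousMap.restrict K ⟨g, hgc⟩) - ((f₀ : C(↥K, ℝ)))‖ := by
          rw [← Real.norm_eq_abs]
          exact ContinuousMap.norm_coe_le_norm _ _
        rw [hev] at h1
        have h2 : ‖(ContinuousMap.restrict K ⟨g, hgc⟩) - ((f₀ : C(↥K, ℝ)))‖
            = ‖((f₀ : C(↥K, ℝ))) - (ContinuousMap.restrict K ⟨g, hgc⟩)‖ := norm_sub_rev _ _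
        rw [h2] at h1
        exact h1.trans hf₀near.le
      have hbound : ∀ (m : Measure (EuclideanSpace ℝ (Fin D))) [IsProbabilityMeasure m],
          m Kᶜ = 0 → |(∫ y, g y ∂m) - ∫ y, Φ y ∂m| ≤ ε / 4 := by
        intro m _ hmK
        rw [← integral_sub (hgint m) (hΦint' m)]
        have hae : ∀ᵐ y ∂m, y ∈ K := by
          rw [ae_iff]
          exact hmK
        calc |∫ y, (g y - Φ y) ∂m| ≤ ∫ y, |g y - Φ y| ∂m := by
              simpa [Real.norm_eq_abs] using
                norm_integral_le_integral_norm (μ := m) (fun y => g y - Φ y)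
          _ ≤ ∫ _, (ε / 4) ∂m := by
              refine integral_mono_ae ((hgint m).sub (hΦint' m)).abs (integrable_const _) ?_
              filter_upwards [hae] with y hy
              exact hptw y hy
          _ = ε / 4 := by simp [measure_univ]
      have hb1 := hbound μ' hnullμ
      have hb2 := hbound ν' hnullν
      have hmid : |(∫ y, Φ y ∂μ') - ∫ y, g y ∂ν'| ≤ ε / 4 := by
        rw [hΦint, abs_sub_comm]
        exact hb2
      calc |(∫ y, g y ∂μ') - ∫ y, g y ∂ν'|
          ≤ |(∫ y, g y ∂μ') - ∫ y, Φ y ∂μ'| + |(∫ y, Φ y ∂μ') - ∫ y, g y ∂ν'| :=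
            abs_sub_le _ _ _
        _ ≤ ε / 4 + ε / 4 := add_le_add hb1 hmid
        _ ≤ ε := by linarith
    have : |(∫ y, g y ∂μ') - ∫ y, g y ∂ν'| ≤ 0 :=
      le_of_forall_pos_le_add (fun ε hε => by simpa using key ε hε)
    have := abs_nonpos_iff.1 this
    linarith [sub_eq_zero.1 this, this]
  have hnn : ∀ (m : Measure (EuclideanSpace ℝ (Fin D))) [IsProbabilityMeasure m],
      ∫⁻ y, (f y : ℝ≥0∞) ∂m = ENNReal.ofReal (∫ y, g y ∂m) := by
    intro m _
    calc ∫⁻ y, (f y : ℝ≥0∞) ∂m = ∫⁻ y, ENNReal.ofReal (g y) ∂m := by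
          congr 1
          funext y
          exact (ENNReal.ofReal_coe_nnreal (p := f y)).symm
      _ = ENNReal.ofReal (∫ y, g y ∂m) :=
          (ofReal_integral_eq_lintegral_ofReal (hgint m)
            (Filter.Eventually.of_forall fun y => (f y).coe_nonneg)).symm
  rw [hnn μ', hnn ν', hint]

end Meas
end FMStar


theorem stmt_16 {X : Type*} [MeasurableSpace X] [StandardBorelSpace X] {D : ℕ}
    (h : X → EuclideanSpace ℝ (Fin D)) (hm : Measurable h) (hinj : Function.Injective h)
    (C : ℝ) (hb : ∀ x, ‖h x‖ ≤ C)
    (hsep : ∀ μ ν : Measure X, IsProbabilityMeasure μ → IsProbabilityMeasure ν →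
      μ ≠ ν → Separable h μ ν) :
    (∀ μ ν : Measure X, IsProbabilityMeasure μ → IsProbabilityMeasure ν →
      0 ≤ ‖(∫ x, h x ∂μ) - ∫ x, h x ∂ν‖) ∧
    (∀ μ ν : Measure X, IsProbabilityMeasure μ → IsProbabilityMeasure ν →
      ‖(∫ x, h x ∂μ) - ∫ x, h x ∂ν‖ = ‖(∫ x, h x ∂ν) - ∫ x, h x ∂μ‖) ∧
    (∀ μ ν κ : Measure X, IsProbabilityMeasure μ → IsProbabilityMeasure ν →
      IsProbabilityMeasure κ →
      ‖(∫ x, h x ∂μ) - ∫ x, h x ∂ν‖ ≤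
        ‖(∫ x, h x ∂μ) - ∫ x, h x ∂κ‖ + ‖(∫ x, h x ∂κ) - ∫ x, h x ∂ν‖) ∧
    (∀ μ ν : Measure X, IsProbabilityMeasure μ → IsProbabilityMeasure ν →
      (‖(∫ x, h x ∂μ) - ∫ x, h x ∂ν‖ = 0 ↔ μ = ν)) := by
  refine ⟨fun μ ν _ _ => norm_nonneg _, fun μ ν _ _ => norm_sub_rev _ _, ?_, ?_⟩
  · intro μ ν κ _ _ _
    have := dist_triangle (∫ x, h x ∂μ) (∫ x, h x ∂κ) (∫ x, h x ∂ν)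
    simpa [dist_eq_norm] using this
  · intro μ ν hμ hν
    haveI := hμ; haveI := hν
    constructor
    · intro h0
      have hmean : (∫ x, h x ∂μ) = ∫ x, h x ∂ν := sub_eq_zero.1 (norm_eq_zero.1 h0)
      have hX : Nonempty X := by
        by_contra hX
        rw [not_nonempty_iff] at hX
        have h1 : μ Set.univ = 1 := hμ.measure_univ
        rw [Set.univ_eq_empty_iff.2 hX] at h1
        simp at h1
      obtain ⟨x₀⟩ := hX
      have hmap := FMStar.map_h_eq h hm hb hsep μ ν hmean x₀
      have hemb : MeasurableEmbedding h := hm.measurableEmbedding hinj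
      refine Measure.ext fun A hA => ?_
      have hAimg : MeasurableSet (h '' A) := hemb.measurableSet_image' hA
      have e1 : μ A = Measure.map h μ (h '' A) := by
        rw [Measure.map_apply hm hAimg, Function.Injective.preimage_image hinj]
      have e2 : ν A = Measure.map h ν (h '' A) := by
        rw [Measure.map_apply hm hAimg, Function.Injective.preimage_image hinj]
      rw [e1, e2, hmap]
    · intro he
      rw [he, sub_self, norm_zero]
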